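/- Let m ≥ 2 and let S be a LexOpt schedule of jobs with processing times p_1,…,p_n > 0 on m identical machines. Let f_r, f_a ≥ 1 be reals, let k_r, k_a, δ be integers with 0 ≤ k_r < m, k_a ≥ 0, δ ≥ 0, and let p̂ be a perturbed processing-time vector with p̂_j ≥ 0 for all j such that: the number of jobs with p̂_j < p_j/f_r is at most k_r, and the number of jobs with p̂_j > f_a·p_j is at most k_a. Consider the schedule on m+δ machines that assigns every job to the same machine as S and leaves the δ new machines empty. Then its makespan under p̂ is at most 2·f_r·(1 + ⌈k_r/(m−k_r)⌉)·(f_a + k_a)·(1 + ⌈δ/m⌉)·C*_max(m+δ, p̂). -/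

import Mathlib

open Finset

/-- Completion time (load) of machine `i` under schedule `σ` and processing times `p`. -/
noncomputable def mLoad {n m : ℕ} (p : Fin n → ℝ) (σ : Fin n → Fin m) (i : Fin m) : ℝ :=
  ∑ j ∈ Finset.univ.filter (fun j => σ j = i), p j

/-- Makespan of schedule `σ`: the maximum machine completion time. -/
noncomputable def makespan {n m : ℕ} (p : Fin n → ℝ) (σ : Fin n → Fin m) : ℝ :=
  ⨆ i, mLoad p σ i

/-- Minimum makespan of the jobs with processing times `p` on `m` machines. -/
noncomputable def optMakespan {n : ℕ} (m : ℕ) (p : Fin n → ℝ) : ℝ :=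
  ⨅ σ : Fin n → Fin m, makespan p σ

/-- The completion-time vector sorted in non-increasing order. -/
noncomputable def sortedDesc {m : ℕ} (C : Fin m → ℝ) : Fin m → ℝ :=
  fun i => C (Tuple.sort C i.rev)

/-- A schedule is LexOpt if its non-increasingly sorted completion-time vector is
lexicographically at most that of every other schedule. -/
def IsLexOpt {n m : ℕ} (p : Fin n → ℝ) (σ : Fin n → Fin m) : Prop :=
  ∀ σ' : Fin n → Fin m, toLex (sortedDesc (mLoad p σ)) ≤ toLex (sortedDesc (mLoad p σ'))

/-- global recovery guarantee. Keeping a LexOpt assignment (leaving the `δ` new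
machines empty) after reductions (≤ `k_r` unstable w.r.t. `f_r`), augmentations (≤ `k_a`
unstable w.r.t. `f_a`) and `δ` machine activations yields makespan at most
`2·f_r·(1 + ⌈k_r/(m-k_r)⌉)·(f_a + k_a)·(1 + ⌈δ/m⌉)·C*_max(m+δ, p̂)`. -/
noncomputable def cnt {m : ℕ} (C : Fin m → ℝ) (x : ℝ) : ℕ :=
  (Finset.univ.filter (fun k => x ≤ C k)).card

lemma cnt_sortedDesc {m : ℕ} (C : Fin m → ℝ) (x : ℝ) : cnt (sortedDesc C) x = cnt C x := by
  classical
  unfold cnt sortedDesc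
  apply Finset.card_bij (fun k _ => Tuple.sort C k.rev)
  · intro k hk
    simp only [mem_filter, mem_univ, true_and] at hk ⊢
    exact hk
  · intro k₁ h₁ k₂ h₂ h
    have := (Tuple.sort C).injective h
    exact Fin.rev_injective this
  · intro k' hk'
    refine ⟨((Tuple.sort C).symm k').rev, ?_, ?_⟩
    · simp only [mem_filter, mem_univ, true_and] at hk' ⊢
      rw [Fin.rev_rev, Equiv.apply_symm_apply]
      exact hk'
    · rw [Fin.rev_rev, Equiv.apply_symm_apply]

lemma antitone_sortedDesc {m : ℕ} (C : Fin m → ℝ) : Antitone (sortedDesc C) := by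
  intro a b hab
  exact Tuple.monotone_sort C (Fin.rev_le_rev.mpr hab)

lemma char_sortedDesc {m : ℕ} (C : Fin m → ℝ) (d : Fin m) (x : ℝ) :
    x ≤ sortedDesc C d ↔ (d : ℕ) < cnt C x := by
  rw [← cnt_sortedDesc]
  constructor
  · intro h
    have hsub : Finset.Iic d ⊆ univ.filter (fun k => x ≤ sortedDesc C k) := by
      intro k hk
      simp only [mem_Iic] at hk
      simp only [mem_filter, mem_univ, true_and]
      exact h.trans (antitone_sortedDesc C hk)
    have := Finset.card_le_card hsub
    rw [Fin.card_Iic] at this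
    unfold cnt
    omega
  · intro h
    by_contra hx
    push_neg at hx
    have hsub : univ.filter (fun k => x ≤ sortedDesc C k) ⊆ Finset.Iio d := by
      intro k hk
      simp only [mem_filter, mem_univ, true_and] at hk
      simp only [mem_Iio]
      by_contra hkd
      push_neg at hkd
      exact absurd (hk.trans (antitone_sortedDesc C hkd)) (not_le_of_gt hx)
    have := Finset.card_le_card hsub
    rw [Fin.card_Iio] at this
    unfold cnt at h
    omega

lemma key_lex {m : ℕ} (C C' : Fin m → ℝ) (i i' : Fin m)
    (h1 : C' i < C i) (h2 : C' i' < C i) (h3 : C i' < C i)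
    (hoth : ∀ k, k ≠ i → k ≠ i' → C' k = C k) :
    Pi.Lex (· < ·) (@fun _ => ((· < ·) : ℝ → ℝ → Prop)) (sortedDesc C') (sortedDesc C) := by
  classical
  set a := C i with ha
  have hii' : i' ≠ i := fun h => by rw [h] at h3; exact lt_irrefl _ h3
  have hgt : ∀ x, a < x → cnt C' x = cnt C x := by
    intro x hx
    unfold cnt
    congr 1
    ext k
    simp only [mem_filter, mem_univ, true_and]
    by_cases hki : k = i
    · subst hki
      exact iff_of_false (fun h => absurd (lt_of_lt_of_le (hx.trans_le h) h1.le) (lt_irrefl _))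
        (fun h => absurd (hx.trans_le h) (lt_irrefl _))
    · by_cases hki' : k = i'
      · subst hki'
        exact iff_of_false (fun h => absurd ((hx.trans_le h).trans h2) (lt_irrefl _))
          (fun h => absurd ((hx.trans_le h).trans h3) (lt_irrefl _))
      · rw [hoth k hki hki']
  have hE : (univ.filter fun k => a ≤ C' k) = (univ.filter fun k => a ≤ C k).erase i := by
    ext k
    simp only [mem_filter, mem_erase, mem_univ, true_and]
    by_cases hki : k = i
    · subst hki
      exact iff_of_false (fun h => absurd (h.trans_lt h1) (lt_irrefl _)) (fun h => h.1 rfl)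
    · by_cases hki' : k = i'
      · subst hki'
        exact iff_of_false (fun h => absurd (h.trans_lt h2) (lt_irrefl _))
          (fun h => absurd (h.2.trans_lt h3) (lt_irrefl _))
      · rw [hoth k hki hki']
        exact ⟨fun h => ⟨hki, h⟩, fun h => h.2⟩
  have hiMem : i ∈ univ.filter fun k => a ≤ C k := by
    simp only [mem_filter, mem_univ, true_and]; exact le_refl a
  have hpos : 0 < cnt C a := Finset.card_pos.mpr ⟨i, hiMem⟩
  have hcard : cnt C a = cnt C' a + 1 := by
    unfold cnt
    rw [hE, Finset.card_erase_of_mem hiMem]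
    unfold cnt at hpos
    omega
  set e := cnt C' a with he
  have hem : e < m := by
    have : cnt C a ≤ m := by
      have := Finset.card_le_card (Finset.filter_subset (fun k => a ≤ C k) univ)
      simpa [cnt] using this
    omega
  refine ⟨⟨e, hem⟩, ?_, ?_⟩
  · intro jj hjj
    have hj : (jj : ℕ) < e := hjj
    have h4 : a ≤ sortedDesc C jj := (char_sortedDesc C jj a).mpr (by omega)
    have h5 : a ≤ sortedDesc C' jj := (char_sortedDesc C' jj a).mpr (by omega)
    apply le_antisymm
    · have hx : (jj : ℕ) < cnt C' (sortedDesc C' jj) := (char_sortedDesc C' jj _).mp le_rfl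
      rcases eq_or_lt_of_le h5 with heq | hlt
      · exact (char_sortedDesc C jj _).mpr (by rw [← heq]; omega)
      · exact (char_sortedDesc C jj _).mpr (by rw [← hgt _ hlt]; omega)
    · have hx : (jj : ℕ) < cnt C (sortedDesc C jj) := (char_sortedDesc C jj _).mp le_rfl
      rcases eq_or_lt_of_le h4 with heq | hlt
      · exact (char_sortedDesc C' jj _).mpr (by rw [← heq]; omega)
      · exact (char_sortedDesc C' jj _).mpr (by rw [hgt _ hlt]; omega)
  · have hCe : a ≤ sortedDesc C ⟨e, hem⟩ := (char_sortedDesc C ⟨e, hem⟩ a).mpr (by simp; omega)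
    have hC'e : sortedDesc C' ⟨e, hem⟩ < a := by
      by_contra h
      push_neg at h
      have h7 : e < e := (char_sortedDesc C' ⟨e, hem⟩ a).mp h
      exact absurd h7 (lt_irrefl e)
    exact hC'e.trans_le hCe

lemma exchange {n m : ℕ} (p : Fin n → ℝ) (hp : ∀ j, 0 < p j) (σ : Fin n → Fin m)
    (hσ : IsLexOpt p σ) (j : Fin n) (i' : Fin m) :
    mLoad p σ (σ j) ≤ mLoad p σ i' + p j := by
  classical
  by_contra hcon
  push_neg at hcon
  set i := σ j with hi
  have hii' : i' ≠ i := by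
    rintro rfl
    have := hp j
    linarith
  set σ' := Function.update σ j i' with hσ'def
  have hfi : (univ.filter fun j' => σ' j' = i) = (univ.filter fun j' => σ j' = i).erase j := by
    ext j'
    simp only [mem_filter, mem_erase, mem_univ, true_and]
    by_cases hj' : j' = j
    · subst hj'
      simp only [hσ'def, Function.update_self]
      exact iff_of_false (fun h => hii' h) (fun h => h.1 rfl)
    · simp only [hσ'def, Function.update_of_ne hj']
      exact ⟨fun h => ⟨hj', h⟩, fun h => h.2⟩
  have hfi' : (univ.filter fun j' => σ' j' = i') = insert j (univ.filter fun j' => σ j' = i') := by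
    ext j'
    simp only [mem_filter, mem_insert, mem_univ, true_and]
    by_cases hj' : j' = j
    · subst hj'
      simp [hσ'def, Function.update_self]
    · simp [hσ'def, Function.update_of_ne hj', hj']
  have hjmem : j ∈ univ.filter fun j' => σ j' = i := by simp [hi]
  have hjnot : j ∉ univ.filter fun j' => σ j' = i' := by
    simp only [mem_filter, mem_univ, true_and]
    exact fun h => hii' h.symm
  have hC'i : mLoad p σ' i = mLoad p σ i - p j := by
    unfold mLoad
    rw [hfi, Finset.sum_erase_eq_sub hjmem]
  have hC'i' : mLoad p σ' i' = mLoad p σ i' + p j := by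
    unfold mLoad
    rw [hfi', Finset.sum_insert hjnot]
    ring
  have hoth : ∀ k, k ≠ i → k ≠ i' → mLoad p σ' k = mLoad p σ k := by
    intro k hk hk'
    unfold mLoad
    congr 1
    ext j'
    simp only [mem_filter, mem_univ, true_and]
    by_cases hj' : j' = j
    · subst hj'
      simp only [hσ'def, Function.update_self]
      exact iff_of_false (fun h => hk' h.symm) (fun h => hk h.symm)
    · rw [hσ'def, Function.update_of_ne hj']
  have hkey := key_lex (mLoad p σ) (mLoad p σ') i i'
    (by rw [hC'i]; linarith [hp j]) (by rw [hC'i']; exact hcon) (by linarith [hp j]) hoth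
  have hlt : toLex (sortedDesc (mLoad p σ')) < toLex (sortedDesc (mLoad p σ)) := hkey
  exact absurd (hσ σ') (not_le_of_gt hlt)

set_option maxHeartbeats 1600000 in
theorem stmt19 (n m : ℕ) (hm : 2 ≤ m) (p : Fin n → ℝ) (hp : ∀ j, 0 < p j)
    (σ : Fin n → Fin m) (hσ : IsLexOpt p σ)
    (fr fa : ℝ) (hfr : 1 ≤ fr) (hfa : 1 ≤ fa)
    (kr ka δ : ℕ) (hkr : kr < m)
    (phat : Fin n → ℝ) (h0 : ∀ j, 0 ≤ phat j)
    (hr : (Finset.univ.filter (fun j => phat j < p j / fr)).card ≤ kr)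
    (ha : (Finset.univ.filter (fun j => fa * p j < phat j)).card ≤ ka) :
    makespan phat (fun j => Fin.castAdd δ (σ j)) ≤
      2 * fr * (1 + (⌈(kr : ℝ) / ((m : ℝ) - kr)⌉₊ : ℝ)) * (fa + (ka : ℝ)) *
        (1 + (⌈(δ : ℝ) / (m : ℝ)⌉₊ : ℝ)) * optMakespan (m + δ) phat := by
  classical
  set X : ℝ := (⌈(kr : ℝ) / ((m : ℝ) - kr)⌉₊ : ℝ) with hX
  set Y : ℝ := (⌈(δ : ℝ) / (m : ℝ)⌉₊ : ℝ) with hY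
  set K : ℝ := 2 * fr * (1 + X) * (fa + (ka : ℝ)) * (1 + Y) with hK
  have hMpos : 0 < m + δ := by omega
  haveI hNe : Nonempty (Fin (m + δ)) := ⟨⟨0, hMpos⟩⟩
  set Copt := optMakespan (m + δ) phat with hCoptdef
  have hX0 : 0 ≤ X := by positivity
  have hY0 : 0 ≤ Y := by positivity
  have hka0 : (0:ℝ) ≤ (ka : ℝ) := by positivity
  have hm0 : (0:ℝ) < (m : ℝ) := by exact_mod_cast (by omega : 0 < m)
  have hmkr : (0:ℝ) < (m : ℝ) - kr := by
    have : (kr : ℝ) < m := by exact_mod_cast hkr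
    linarith
  -- basic facts about Copt
  have hload_le : ∀ (τ : Fin n → Fin (m + δ)) i, mLoad phat τ i ≤ makespan phat τ := by
    intro τ i
    exact le_ciSup (Set.Finite.bddAbove (Set.finite_range _)) i
  have hms_nonneg : ∀ τ : Fin n → Fin (m + δ), 0 ≤ makespan phat τ := by
    intro τ
    have h2 : 0 ≤ mLoad phat τ ⟨0, hMpos⟩ := Finset.sum_nonneg fun j _ => h0 j
    exact h2.trans (hload_le τ _)
  have hCopt0 : 0 ≤ Copt := le_ciInf hms_nonneg
  have hjob : ∀ j, phat j ≤ Copt := by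
    intro j
    apply le_ciInf
    intro τ
    have h1 : phat j ≤ mLoad phat τ (τ j) := by
      apply Finset.single_le_sum (f := phat) (fun k _ => h0 k)
      simp
    exact h1.trans (hload_le τ _)
  have hsum : (∑ j, phat j) ≤ (m + δ : ℝ) * Copt := by
    have hdiv : (∑ j, phat j) / (m + δ : ℝ) ≤ Copt := by
      apply le_ciInf
      intro τ
      rw [div_le_iff₀ (by positivity)]
      have heq : (∑ j, phat j) = ∑ i : Fin (m + δ), mLoad phat τ i := by
        unfold mLoad
        rw [Finset.sum_fiberwise_eq_sum_filter univ univ τ phat]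
        simp
      rw [heq]
      calc ∑ i : Fin (m + δ), mLoad phat τ i ≤ ∑ _i : Fin (m + δ), makespan phat τ :=
            Finset.sum_le_sum fun i _ => hload_le τ i
        _ = (m + δ : ℝ) * makespan phat τ := by
            rw [Finset.sum_const]
            simp [mul_comm]
        _ = makespan phat τ * (m + δ : ℝ) := mul_comm _ _
    calc (∑ j, phat j) = ((∑ j, phat j) / (m + δ : ℝ)) * (m + δ : ℝ) := by field_simp
      _ ≤ Copt * (m + δ : ℝ) := mul_le_mul_of_nonneg_right hdiv (by positivity)
      _ = (m + δ : ℝ) * Copt := mul_comm _ _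
  -- clean machines
  set R : Finset (Fin n) := univ.filter (fun j => phat j < p j / fr) with hR
  set A : Finset (Fin n) := univ.filter (fun j => fa * p j < phat j) with hA
  have hnotR : ∀ j, j ∉ R → p j ≤ fr * phat j := by
    intro j hj
    simp only [hR, mem_filter, mem_univ, true_and, not_lt] at hj
    rw [div_le_iff₀ (by linarith)] at hj
    linarith [mul_comm fr (phat j)]
  set Clean : Finset (Fin m) := univ.filter (fun c => ∀ j, σ j = c → j ∉ R) with hClean
  have hCleanCard : m - kr ≤ Clean.card := by
    have hsub : univ \ Clean ⊆ R.image σ := by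
      intro c hc
      simp only [mem_sdiff, mem_univ, true_and, hClean, mem_filter, not_forall] at hc
      obtain ⟨j, hj1, hj2⟩ := hc
      simp only [not_not] at hj2
      exact Finset.mem_image.mpr ⟨j, hj2, hj1⟩
    have h1 : (univ \ Clean).card ≤ kr :=
      (Finset.card_le_card hsub).trans ((Finset.card_image_le).trans hr)
    have h2 : (univ \ Clean).card = m - Clean.card := by
      rw [Finset.card_sdiff_of_subset (Finset.subset_univ _)]
      simp
    have h3 : Clean.card ≤ m := by
      simpa using Finset.card_le_card (Finset.subset_univ Clean)
    omega
  have hCleanNe : Clean.Nonempty := Finset.card_pos.mp (by omega)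
  obtain ⟨c, hcClean, hcmin⟩ := Finset.exists_min_image Clean (mLoad p σ) hCleanNe
  have hCnonneg : ∀ i0 : Fin m, 0 ≤ mLoad p σ i0 :=
    fun i0 => Finset.sum_nonneg fun j _ => (hp j).le
  -- bound on C c
  have hCleanSum : ((m : ℝ) - kr) * mLoad p σ c ≤ fr * ((m + δ : ℝ) * Copt) := by
    have h1 : (Clean.card : ℝ) * mLoad p σ c ≤ ∑ c' ∈ Clean, mLoad p σ c' := by
      have := Finset.card_nsmul_le_sum Clean (mLoad p σ) (mLoad p σ c) (fun x hx => hcmin x hx)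
      simpa [nsmul_eq_mul] using this
    have h2 : ∑ c' ∈ Clean, mLoad p σ c' = ∑ j ∈ univ.filter (fun j => σ j ∈ Clean), p j := by
      unfold mLoad
      exact Finset.sum_fiberwise_eq_sum_filter univ Clean σ p
    have h3 : ∑ j ∈ univ.filter (fun j => σ j ∈ Clean), p j
        ≤ fr * ∑ j ∈ univ.filter (fun j => σ j ∈ Clean), phat j := by
      rw [Finset.mul_sum]
      apply Finset.sum_le_sum
      intro j hj
      simp only [mem_filter, mem_univ, true_and] at hj
      simp only [hClean, mem_filter, mem_univ, true_and] at hj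
      exact hnotR j (hj j rfl)
    have h4 : ∑ j ∈ univ.filter (fun j => σ j ∈ Clean), phat j ≤ ∑ j, phat j :=
      Finset.sum_le_sum_of_subset_of_nonneg (Finset.filter_subset _ _)
        (fun j _ _ => h0 j)
    have h5 : ((m : ℝ) - kr) * mLoad p σ c ≤ (Clean.card : ℝ) * mLoad p σ c := by
      apply mul_le_mul_of_nonneg_right _ (hCnonneg c)
      have : ((m - kr : ℕ) : ℝ) ≤ (Clean.card : ℝ) := by exact_mod_cast hCleanCard
      have hcast : ((m - kr : ℕ) : ℝ) = (m : ℝ) - kr := by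
        push_cast [Nat.cast_sub hkr.le]
        ring
      linarith
    have h6 : fr * ∑ j, phat j ≤ fr * ((m + δ : ℝ) * Copt) :=
      mul_le_mul_of_nonneg_left hsum (by linarith)
    have h7 : fr * ∑ j ∈ univ.filter (fun j => σ j ∈ Clean), phat j ≤ fr * ∑ j, phat j :=
      mul_le_mul_of_nonneg_left h4 (by linarith)
    linarith
  -- (m+δ) ≤ (1+X)(1+Y)(m-kr)
  have hMle : ((m : ℝ) + δ) ≤ (1 + X) * (1 + Y) * ((m : ℝ) - kr) := by
    have hXge : (kr : ℝ) / ((m : ℝ) - kr) ≤ X := Nat.le_ceil _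
    have hYge : (δ : ℝ) / (m : ℝ) ≤ Y := Nat.le_ceil _
    have e1 : ((m : ℝ) + δ) = (1 + (δ : ℝ) / m) * ((1 + (kr : ℝ) / ((m : ℝ) - kr)) * ((m : ℝ) - kr)) := by
      field_simp
      try ring
    rw [e1]
    have hstep1 : (1 + (kr : ℝ) / ((m : ℝ) - kr)) * ((m : ℝ) - kr) ≤ (1 + X) * ((m : ℝ) - kr) :=
      mul_le_mul_of_nonneg_right (by linarith) hmkr.le
    have hq : 0 ≤ (1 + (kr : ℝ) / ((m : ℝ) - kr)) * ((m : ℝ) - kr) := by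
      apply mul_nonneg _ hmkr.le
      have : 0 ≤ (kr : ℝ) / ((m : ℝ) - kr) := by positivity
      linarith
    calc (1 + (δ : ℝ) / m) * ((1 + (kr : ℝ) / ((m : ℝ) - kr)) * ((m : ℝ) - kr))
        ≤ (1 + Y) * ((1 + (kr : ℝ) / ((m : ℝ) - kr)) * ((m : ℝ) - kr)) := by
          apply mul_le_mul_of_nonneg_right (by linarith) hq
      _ ≤ (1 + Y) * ((1 + X) * ((m : ℝ) - kr)) := by
          apply mul_le_mul_of_nonneg_left hstep1 (by linarith)
      _ = (1 + X) * (1 + Y) * ((m : ℝ) - kr) := by ring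
  have hCc : mLoad p σ c ≤ fr * (1 + X) * (1 + Y) * Copt := by
    have h8 : fr * ((m + δ : ℝ) * Copt) ≤ ((m : ℝ) - kr) * (fr * (1 + X) * (1 + Y) * Copt) := by
      have h9 : ((m : ℝ) + δ) * Copt ≤ (1 + X) * (1 + Y) * ((m : ℝ) - kr) * Copt :=
        mul_le_mul_of_nonneg_right hMle hCopt0
      have hcast2 : ((m + δ : ℕ) : ℝ) = (m : ℝ) + δ := by push_cast; ring
      nlinarith [h9, hfr]
    have h10 : ((m : ℝ) - kr) * mLoad p σ c ≤ ((m : ℝ) - kr) * (fr * (1 + X) * (1 + Y) * Copt) := by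
      have hcast2 : ((m + δ : ℕ) : ℝ) = (m : ℝ) + δ := by push_cast; ring
      calc ((m : ℝ) - kr) * mLoad p σ c ≤ fr * ((m + δ : ℝ) * Copt) := hCleanSum
        _ ≤ ((m : ℝ) - kr) * (fr * (1 + X) * (1 + Y) * Copt) := h8
    exact le_of_mul_le_mul_left h10 hmkr
  have hK1 : (1 : ℝ) ≤ K := by
    have h1 : (1:ℝ) ≤ 2 * fr := by linarith
    have h2 : (1:ℝ) ≤ 2 * fr * (1 + X) := one_le_mul_of_one_le_of_one_le h1 (by linarith)
    have h3 : (1:ℝ) ≤ 2 * fr * (1 + X) * (fa + ka) :=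
      one_le_mul_of_one_le_of_one_le h2 (by linarith)
    exact one_le_mul_of_one_le_of_one_le h3 (by linarith)
  -- per machine bound
  have hmain : ∀ i0 : Fin m, mLoad phat σ i0 ≤ K * Copt := by
    intro i0
    set J : Finset (Fin n) := univ.filter (fun j => σ j = i0) with hJ
    rcases Nat.lt_or_ge J.card 2 with hcard | hcard
    · rcases Nat.lt_or_ge J.card 1 with hc0 | hc1
      · have : J = ∅ := Finset.card_eq_zero.mp (by omega)
        have : mLoad phat σ i0 = 0 := by
          unfold mLoad
          rw [← hJ, this, Finset.sum_empty]
        rw [this]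
        positivity
      · obtain ⟨j, hj⟩ := Finset.card_eq_one.mp (le_antisymm (by omega) hc1)
        have : mLoad phat σ i0 = phat j := by
          unfold mLoad
          rw [← hJ, hj, Finset.sum_singleton]
        rw [this]
        calc phat j ≤ Copt := hjob j
          _ = 1 * Copt := (one_mul _).symm
          _ ≤ K * Copt := mul_le_mul_of_nonneg_right hK1 hCopt0
    · -- at least two jobs on machine i0
      have hJne : J.Nonempty := Finset.card_pos.mp (by omega)
      obtain ⟨j0, hj0J, hj0min⟩ := Finset.exists_min_image J p hJne
      have hj0i : σ j0 = i0 := by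
        simpa [hJ] using (Finset.mem_filter.mp hj0J).2
      have hpj0 : 2 * p j0 ≤ mLoad p σ i0 := by
        have h1 : J.card • p j0 ≤ ∑ j ∈ J, p j := Finset.card_nsmul_le_sum J p (p j0) hj0min
        have h2 : (2 : ℝ) * p j0 ≤ (J.card : ℝ) * p j0 := by
          apply mul_le_mul_of_nonneg_right _ (hp j0).le
          exact_mod_cast hcard
        have h3 : mLoad p σ i0 = ∑ j ∈ J, p j := by unfold mLoad; rw [← hJ]
        rw [h3]
        calc (2:ℝ) * p j0 ≤ (J.card : ℝ) * p j0 := h2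
          _ = J.card • p j0 := by simp [nsmul_eq_mul]
          _ ≤ ∑ j ∈ J, p j := h1
      have hexch : mLoad p σ i0 ≤ mLoad p σ c + p j0 := by
        have := exchange p hp σ hσ j0 c
        rwa [hj0i] at this
      have hCi0 : mLoad p σ i0 ≤ 2 * mLoad p σ c := by linarith
      -- split the load
      have hsplit : mLoad phat σ i0 =
          (∑ j ∈ J.filter (fun j => j ∈ A), phat j) +
          (∑ j ∈ J.filter (fun j => j ∉ A), phat j) := by
        unfold mLoad
        rw [← hJ]
        exact (Finset.sum_filter_add_sum_filter_not J _ phat).symm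
      have haug : (∑ j ∈ J.filter (fun j => j ∈ A), phat j) ≤ (ka : ℝ) * Copt := by
        have h1 : ∀ j ∈ J.filter (fun j => j ∈ A), phat j ≤ Copt := fun j _ => hjob j
        have h2 := Finset.sum_le_card_nsmul _ _ _ h1
        have h3 : (J.filter (fun j => j ∈ A)).card ≤ ka := by
          apply le_trans _ ha
          apply Finset.card_le_card
          intro j hj
          exact (Finset.mem_filter.mp hj).2
        calc (∑ j ∈ J.filter (fun j => j ∈ A), phat j)
            ≤ (J.filter (fun j => j ∈ A)).card • Copt := h2
          _ = ((J.filter (fun j => j ∈ A)).card : ℝ) * Copt := by simp [nsmul_eq_mul]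
          _ ≤ (ka : ℝ) * Copt := by
              apply mul_le_mul_of_nonneg_right _ hCopt0
              exact_mod_cast h3
      have hnonaug : (∑ j ∈ J.filter (fun j => j ∉ A), phat j) ≤ fa * mLoad p σ i0 := by
        have h1 : (∑ j ∈ J.filter (fun j => j ∉ A), phat j)
            ≤ ∑ j ∈ J.filter (fun j => j ∉ A), fa * p j := by
          apply Finset.sum_le_sum
          intro j hj
          have := (Finset.mem_filter.mp hj).2
          simp only [hA, mem_filter, mem_univ, true_and, not_lt] at this
          exact this
        have h2 : (∑ j ∈ J.filter (fun j => j ∉ A), fa * p j) ≤ ∑ j ∈ J, fa * p j := by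
          apply Finset.sum_le_sum_of_subset_of_nonneg (Finset.filter_subset _ _)
          intro j _ _
          exact mul_nonneg (by linarith) (hp j).le
        have h3 : (∑ j ∈ J, fa * p j) = fa * mLoad p σ i0 := by
          unfold mLoad
          rw [← hJ, Finset.mul_sum]
        linarith
      have hfinal : mLoad phat σ i0 ≤ (ka : ℝ) * Copt + fa * (2 * (fr * (1 + X) * (1 + Y) * Copt)) := by
        have h1 : fa * mLoad p σ i0 ≤ fa * (2 * mLoad p σ c) :=
          mul_le_mul_of_nonneg_left hCi0 (by linarith)
        have h2 : fa * (2 * mLoad p σ c) ≤ fa * (2 * (fr * (1 + X) * (1 + Y) * Copt)) := by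
          apply mul_le_mul_of_nonneg_left _ (by linarith)
          linarith
        linarith
      have hKexp : (ka : ℝ) * Copt + fa * (2 * (fr * (1 + X) * (1 + Y) * Copt)) ≤ K * Copt := by
        have hq1 : (0:ℝ) ≤ (1 + X) * (1 + Y) := by positivity
        have hq2 : (1:ℝ) ≤ 2 * fr * ((1 + X) * (1 + Y)) :=
          one_le_mul_of_one_le_of_one_le (by linarith)
            (one_le_mul_of_one_le_of_one_le (by linarith) (by linarith))
        have : K = 2 * fr * ((1 + X) * (1 + Y)) * fa + 2 * fr * ((1 + X) * (1 + Y)) * ka := by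
          rw [hK]; ring
        rw [this, add_mul]
        have hA1 : fa * (2 * (fr * (1 + X) * (1 + Y) * Copt)) = 2 * fr * ((1 + X) * (1 + Y)) * fa * Copt := by ring
        have hA2 : (ka : ℝ) * Copt ≤ 2 * fr * ((1 + X) * (1 + Y)) * ka * Copt := by
          have : (ka : ℝ) ≤ 2 * fr * ((1 + X) * (1 + Y)) * ka := by
            calc (ka : ℝ) = 1 * ka := (one_mul _).symm
              _ ≤ 2 * fr * ((1 + X) * (1 + Y)) * ka := mul_le_mul_of_nonneg_right hq2 hka0
          exact mul_le_mul_of_nonneg_right this hCopt0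
        linarith
      linarith
  -- conclude
  unfold makespan
  apply ciSup_le
  intro i
  rcases Nat.lt_or_ge (i : ℕ) m with him | him
  · have heq : (univ.filter fun j => (Fin.castAdd δ (σ j)) = i)
        = univ.filter fun j => σ j = ⟨i, him⟩ := by
      ext j
      simp only [mem_filter, mem_univ, true_and]
      constructor
      · intro h
        apply Fin.ext
        have := congrArg Fin.val h
        simpa using this
      · intro h
        apply Fin.ext
        simp [h]
    have : mLoad phat (fun j => Fin.castAdd δ (σ j)) i = mLoad phat σ ⟨i, him⟩ := by
      unfold mLoad
      rw [heq]
    rw [this]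
    exact hmain ⟨i, him⟩
  · have heq : (univ.filter fun j => (Fin.castAdd δ (σ j)) = i) = ∅ := by
      apply Finset.filter_false_of_mem
      intro j _
      intro h
      have := congrArg Fin.val h
      simp at this
      omega
    have : mLoad phat (fun j => Fin.castAdd δ (σ j)) i = 0 := by
      unfold mLoad
      rw [heq, Finset.sum_empty]
    rw [this]
    have : (0:ℝ) ≤ K * Copt := mul_nonneg (by linarith) hCopt0
    linarith [this]
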